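/- Let Z = O(ℂ²_q) be the quantum plane (generators x,y, relation xy = qyx, q² ≠ 1) and let Ω be the free bimodule over the localization at x,y generated by a 2-dimensional central vector space with basis e₁, e₂. Set ω₋ := q²x²y⁻²e₁ + y⁻²e₂ and d₋z := ω₋z − zω₋. Then d₋x = (q²−1)q²x³y⁻²e₁ + (q²−1)xy⁻²e₂ and d₋y = (q²−1)x²y⁻¹e₁, and the bimodule relations of the Wess–Zumino calculus Γ₋ hold: y·d₋x = q⁻¹ d₋x·y + (q⁻²−1) d₋y·x, x·d₋y = q⁻¹ d₋y·x, x·d₋x = q⁻² d₋x·x, y·d₋y = q⁻² d₋y·y. -/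
import Mathlib


/-- The free bimodule `Ω = Ǒ(ℂ²_q) e₁ ⊕ Ǒ(ℂ²_q) e₂` on two central generators,
realized as `R × R` with componentwise bimodule structure (`(z,z)` is the bimodule
action of `z`), and the map `d₋z = ω₋ z − z ω₋` for `ω₋ = q²x²y⁻²e₁ + y⁻²e₂`. -/
def dMinus {R : Type*} [Ring R] [Algebra ℂ R] (q : ℂ) (x yi : R) (z : R) : R × R :=
  ((q ^ 2 • (x * x * (yi * yi)), yi * yi) : R × R) * (z, z) -
    (z, z) * ((q ^ 2 • (x * x * (yi * yi)), yi * yi) : R × R)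

/-- For the quantum plane (`xy = qyx`, `q² ≠ 1`) and `d₋z = ω₋z − zω₋`
with `ω₋ = q²x²y⁻²e₁ + y⁻²e₂` in the free bimodule with central basis `e₁, e₂`,
one has `d₋x = (q²−1)q²x³y⁻²e₁ + (q²−1)xy⁻²e₂`, `d₋y = (q²−1)x²y⁻¹e₁`, and the
bimodule relations of the Wess–Zumino calculus `Γ₋`:
`y·d₋x = q⁻¹d₋x·y + (q⁻²−1)d₋y·x`, `x·d₋y = q⁻¹d₋y·x`,
`x·d₋x = q⁻²d₋x·x`, `y·d₋y = q⁻²d₋y·y`. -/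
theorem statement17 {R : Type*} [Ring R] [Algebra ℂ R]
    (q : ℂ) (hq0 : q ≠ 0) (hq2 : q ^ 2 ≠ 1)
    (x y xi yi : R)
    (hxy : x * y = q • (y * x))
    (hxr : x * xi = 1) (hxl : xi * x = 1) (hyr : y * yi = 1) (hyl : yi * y = 1) :
    dMinus q x yi x =
      (((q ^ 2 - 1) * q ^ 2) • (x * x * x * (yi * yi)), (q ^ 2 - 1) • (x * (yi * yi))) ∧
    dMinus q x yi y = ((q ^ 2 - 1) • (x * x * yi), (0 : R)) ∧
    ((y, y) : R × R) * dMinus q x yi x =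
      q⁻¹ • (dMinus q x yi x * (y, y)) +
        ((q ^ 2)⁻¹ - 1) • (dMinus q x yi y * (x, x)) ∧
    ((x, x) : R × R) * dMinus q x yi y = q⁻¹ • (dMinus q x yi y * (x, x)) ∧
    ((x, x) : R × R) * dMinus q x yi x = (q ^ 2)⁻¹ • (dMinus q x yi x * (x, x)) ∧
    ((y, y) : R × R) * dMinus q x yi y = (q ^ 2)⁻¹ • (dMinus q x yi y * (y, y)) := by
  have l1b : yi * x = q • (x * yi) := by
    calc yi * x = yi * (x * (y * yi)) := by rw [hyr, mul_one]
    _ = yi * ((x * y) * yi) := by rw [mul_assoc]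
    _ = yi * ((q • (y * x)) * yi) := by rw [hxy]
    _ = q • (yi * y * (x * yi)) := by
        simp [smul_mul_assoc, mul_smul_comm, mul_assoc]
    _ = q • (x * yi) := by rw [hyl, one_mul]
  have l2b : y * x = q⁻¹ • (x * y) := by
    rw [hxy, smul_smul, inv_mul_cancel₀ hq0, one_smul]
  have l1 : ∀ t : R, yi * (x * t) = q • (x * (yi * t)) := by
    intro t; rw [← mul_assoc, l1b, smul_mul_assoc, mul_assoc]
  have l2 : ∀ t : R, y * (x * t) = q⁻¹ • (x * (y * t)) := by
    intro t; rw [← mul_assoc, l2b, smul_mul_assoc, mul_assoc]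
  have l3 : ∀ t : R, y * (yi * t) = t := by
    intro t; rw [← mul_assoc, hyr, one_mul]
  have l4 : ∀ t : R, yi * (y * t) = t := by
    intro t; rw [← mul_assoc, hyl, one_mul]
  refine ⟨?_, ?_, ?_, ?_, ?_, ?_⟩ <;>
    simp [dMinus, Prod.ext_iff, mul_assoc, l1b, l2b, l1, l2, l3, l4, hyr, hyl, mul_sub, sub_mul, mul_add, add_mul,
      smul_mul_assoc, mul_smul_comm, smul_smul, sub_smul, smul_sub, smul_add,
      sub_eq_iff_eq_add] <;>
    try constructor
  all_goals match_scalars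
  all_goals field_simp
  all_goals try ring
  all_goals rw [inv_pow]
  all_goals field_simp
  all_goals try ring
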